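/- arXiv:math/0305105 — 3 statements merged into one kernel-verified Lean document; each statement's English description precedes it below -/
import Mathlib

section
/- Let B be a C*-subalgebra of the algebra B(H) of bounded linear operators on a Hilbert space H. If P₁ and P₂ are two orthogonal projections in the commutant B′ of B such that the restrictions of B to H₁ = P₁(H) and to H₂ = P₂(H) are both irreducible representations of B, and these two restricted representations are not unitarily equivalent (are distinct), then H₁ is orthogonal to H₂. -/
set_option maxHeartbeats 1000000
set_option synthInstance.maxHeartbeats 400000


noncomputable section

open ContinuousLinearMap

section CStarAux
variable {A : Type*} [CStarAlgebra A]

lemma aux_bump_mul (μ₁ μ₂ : ℂ) (r : ℝ) (hr : r = dist μ₁ μ₂ / 2) (hne : μ₁ ≠ μ₂) (z : ℂ) :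
    ((max 0 (1 - dist z μ₁ / r) : ℝ) : ℂ) * ((max 0 (1 - dist z μ₂ / r) : ℝ) : ℂ) = 0 := by
  have hd : 0 < dist μ₁ μ₂ := dist_pos.mpr hne
  have hr0 : 0 < r := by rw [hr]; linarith
  rcases le_or_gt r (dist z μ₁) with h1 | h1
  · have h : (1 : ℝ) - dist z μ₁ / r ≤ 0 := by
      have : (1:ℝ) ≤ dist z μ₁ / r := (one_le_div hr0).mpr h1
      linarith
    simp [max_eq_left h]
  · have h2 : r ≤ dist z μ₂ := by
      have ht := dist_triangle μ₁ z μ₂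
      rw [dist_comm μ₁ z] at ht
      rw [hr] at h1 ⊢
      linarith
    have h : (1 : ℝ) - dist z μ₂ / r ≤ 0 := by
      have : (1:ℝ) ≤ dist z μ₂ / r := (one_le_div hr0).mpr h2
      linarith
    simp [max_eq_left h]

lemma aux_singleton [Nontrivial A] (a : A) (ha : IsSelfAdjoint a)
    (hzero : ∀ f g : ℂ → ℂ, Continuous f → Continuous g → (∀ z, f z * g z = 0) →
      cfc f a = 0 ∨ cfc g a = 0) :
    ∀ μ₁ ∈ spectrum ℂ a, ∀ μ₂ ∈ spectrum ℂ a, μ₁ = μ₂ := by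
  intro μ₁ h₁ μ₂ h₂
  by_contra hne
  have : IsStarNormal a := ha.isStarNormal
  set r : ℝ := dist μ₁ μ₂ / 2 with hr
  set f : ℂ → ℂ := fun z => ((max 0 (1 - dist z μ₁ / r) : ℝ) : ℂ) with hf
  set g : ℂ → ℂ := fun z => ((max 0 (1 - dist z μ₂ / r) : ℝ) : ℂ) with hg
  have hfc : Continuous f := by fun_prop
  have hgc : Continuous g := by fun_prop
  have hd : 0 < dist μ₁ μ₂ := dist_pos.mpr hne
  have hr0 : 0 < r := by rw [hr]; linarith
  have key : ∀ (μ : ℂ), μ ∈ spectrum ℂ a →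
      ∀ (h : ℂ → ℂ), Continuous h → h μ = 1 → cfc h a ≠ 0 := by
    intro μ hμ h hc h1 h0
    have hsp : spectrum ℂ (cfc h a) = h '' spectrum ℂ a := cfc_map_spectrum h a
    rw [h0, spectrum.zero_eq] at hsp
    have : (1 : ℂ) ∈ ({0} : Set ℂ) := by
      rw [hsp]; exact ⟨μ, hμ, h1⟩
    simp at this
  have hfμ : f μ₁ = 1 := by simp [hf, hr0.le]
  have hgμ : g μ₂ = 1 := by simp [hg, hr0.le]
  rcases hzero f g hfc hgc (fun z => aux_bump_mul μ₁ μ₂ r hr hne z) with h | h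
  · exact key μ₁ h₁ f hfc hfμ h
  · exact key μ₂ h₂ g hgc hgμ h

lemma aux_scalar (a : A) (ha : IsSelfAdjoint a) (μ : ℂ)
    (hspec : spectrum ℂ a = {μ}) : a = algebraMap ℂ A μ := by
  have hμre : μ = μ.re := ha.mem_spectrum_eq_re (hspec ▸ rfl)
  have hsa' : IsSelfAdjoint (a - algebraMap ℂ A μ) := by
    refine ha.sub ?_
    rw [hμre]
    exact IsSelfAdjoint.algebraMap A (by simp [IsSelfAdjoint, Complex.conj_ofReal])
  have hspec' : spectrum ℂ (a - algebraMap ℂ A μ) = {0} := by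
    rw [← spectrum.sub_singleton_eq, hspec, Set.singleton_sub_singleton, sub_self]
  have hrad : spectralRadius ℂ (a - algebraMap ℂ A μ) = 0 := by
    simp [spectralRadius, hspec']
  have h1 := hsa'.spectralRadius_eq_nnnorm
  rw [hrad] at h1
  have h2 : ‖a - algebraMap ℂ A μ‖₊ = 0 := by exact_mod_cast h1.symm
  have h3 : a - algebraMap ℂ A μ = 0 := by simpa using h2
  exact sub_eq_zero.mp h3

lemma aux_cfc_mem_elemental (a : A) [IsStarNormal a] (f : ℂ → ℂ) :
    cfc f a ∈ StarAlgebra.elemental ℂ a := by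
  by_cases hf : ContinuousOn f (spectrum ℂ a)
  · rw [cfc_apply f a ‹_› hf, cfcHom_eq_of_isStarNormal]
    exact ((continuousFunctionalCalculus a) _).2
  · rw [cfc_apply_of_not_continuousOn a hf]; exact zero_mem _

lemma aux_commute_cfc (a b : A) [IsStarNormal a] (f : ℂ → ℂ)
    (h1 : b * a = a * b) (h2 : star b * a = a * star b) :
    b * cfc f a = cfc f a * b := by
  have hmem : a ∈ StarSubalgebra.centralizer ℂ {b} := by
    rw [StarSubalgebra.mem_centralizer_iff]
    rintro g rfl
    exact ⟨h1, h2⟩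
  have hclosed : IsClosed ((StarSubalgebra.centralizer ℂ {b} : StarSubalgebra ℂ A) : Set A) := by
    rw [StarSubalgebra.coe_centralizer]
    have heq : Set.centralizer (({b} : Set A) ∪ star ({b} : Set A)) =
        ⋂ m ∈ (({b} : Set A) ∪ star ({b} : Set A)), {x | m * x = x * m} := by
      ext x; simp [Set.mem_centralizer_iff]
    rw [heq]
    exact isClosed_biInter fun m _ =>
      isClosed_eq (continuous_const.mul continuous_id) (continuous_id.mul continuous_const)
  have hle := StarAlgebra.elemental.le_of_mem hclosed hmem
  have := hle (aux_cfc_mem_elemental a f)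
  exact ((StarSubalgebra.mem_centralizer_iff ℂ).mp this b rfl).1

end CStarAux
open ContinuousLinearMap

section RestrictAux
variable {H : Type} [NormedAddCommGroup H] [InnerProductSpace ℂ H] [CompleteSpace H]

/-- Restriction of a continuous linear map to an invariant submodule. -/
noncomputable def auxRestrict (H₁ : Submodule ℂ H) (b : H →L[ℂ] H)
    (hb : ∀ z ∈ H₁, b z ∈ H₁) : H₁ →L[ℂ] H₁ :=
  ContinuousLinearMap.codRestrict (b.comp H₁.subtypeL) H₁ fun z => hb z z.2

@[simp] lemma auxRestrict_apply (H₁ : Submodule ℂ H) (b : H →L[ℂ] H)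
    (hb : ∀ z ∈ H₁, b z ∈ H₁) (z : H₁) : (auxRestrict H₁ b hb z : H) = b z := rfl

lemma auxRestrict_comm (H₁ : Submodule ℂ H) (a b : H →L[ℂ] H)
    (ha : ∀ z ∈ H₁, a z ∈ H₁) (hb : ∀ z ∈ H₁, b z ∈ H₁)
    (h : a * b = b * a) :
    auxRestrict H₁ a ha * auxRestrict H₁ b hb = auxRestrict H₁ b hb * auxRestrict H₁ a ha := by
  ext z
  show a (b z) = b (a z)
  calc a (b z) = (a * b) z := rfl
  _ = (b * a) z := by rw [h]
  _ = b (a z) := rfl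

lemma auxRestrict_adjoint (H₁ : Submodule ℂ H) [CompleteSpace H₁] (b : H →L[ℂ] H)
    (hb : ∀ z ∈ H₁, b z ∈ H₁) (hb' : ∀ z ∈ H₁, adjoint b z ∈ H₁) :
    adjoint (auxRestrict H₁ b hb) = auxRestrict H₁ (adjoint b) hb' := by
  symm
  rw [eq_adjoint_iff]
  intro x y
  rw [Submodule.coe_inner, Submodule.coe_inner, auxRestrict_apply, auxRestrict_apply,
    adjoint_inner_left]

end RestrictAux


section Schur
variable {E : Type} [NormedAddCommGroup E] [InnerProductSpace ℂ E] [CompleteSpace E]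

lemma aux_schur (hnt : Nontrivial (E →L[ℂ] E))
    (S : E →L[ℂ] E) (hS : IsSelfAdjoint S)
    (Γ : Set (E →L[ℂ] E)) (hstar : ∀ T ∈ Γ, star T ∈ Γ)
    (hScomm : ∀ T ∈ Γ, T * S = S * T)
    (hone : ∀ A C : E →L[ℂ] E, (∀ T ∈ Γ, T * C = C * T) → C ≠ 0 → A * C = 0 → A = 0) :
    ∃ μ : ℂ, S = algebraMap ℂ (E →L[ℂ] E) μ := by
  haveI := hnt
  haveI : IsStarNormal S := ⟨by rw [hS.star_eq]⟩
  have hzero : ∀ f g : ℂ → ℂ, Continuous f → Continuous g → (∀ z, f z * g z = 0) →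
      cfc f S = 0 ∨ cfc g S = 0 := by
    intro f g hf hg hfg
    by_cases hC : cfc g S = 0
    · exact Or.inr hC
    · left
      have hCcomm : ∀ T ∈ Γ, T * cfc g S = cfc g S * T := fun T hT =>
        aux_commute_cfc S T g (hScomm T hT) (hScomm (star T) (hstar T hT))
      have hAC : cfc f S * cfc g S = 0 := by
        have h1 : cfc (fun z => f z * g z) S = cfc f S * cfc g S :=
          cfc_mul f g S hf.continuousOn hg.continuousOn
        rw [← h1]
        have h2 : (fun z : ℂ => f z * g z) = (fun _ : ℂ => (0 : ℂ)) := funext hfg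
        rw [h2]
        exact cfc_const_zero ℂ S
      exact hone _ _ hCcomm hC hAC
  obtain ⟨μ, hμ⟩ := spectrum.nonempty S
  have hsing : spectrum ℂ S = {μ} :=
    Set.eq_singleton_iff_unique_mem.mpr ⟨hμ, fun z hz => aux_singleton S hS hzero z hz μ hμ⟩
  exact ⟨μ, aux_scalar S hS μ hsing⟩

end Schur

open ContinuousLinearMap in
/-- Lemma 1.4 (Lemma a): if two projections in the commutant of a C*-subalgebra `B ⊆ B(H)`
cut out irreducible and mutually inequivalent subrepresentations of `B`, then their ranges
are orthogonal. -/
theorem orthogonal_of_distinct_irreducible_subreps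
    {H : Type} [NormedAddCommGroup H] [InnerProductSpace ℂ H] [CompleteSpace H]
    (B : StarSubalgebra ℂ (H →L[ℂ] H)) (hBclosed : IsClosed (B : Set (H →L[ℂ] H)))
    (P₁ P₂ : H →L[ℂ] H)
    (hP₁idem : IsIdempotentElem P₁) (hP₁sa : adjoint P₁ = P₁)
    (hP₂idem : IsIdempotentElem P₂) (hP₂sa : adjoint P₂ = P₂)
    (hP₁comm : ∀ b ∈ B, P₁ * b = b * P₁) (hP₂comm : ∀ b ∈ B, P₂ * b = b * P₂)
    (H₁ H₂ : Submodule ℂ H)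
    (hH₁ : H₁ = LinearMap.range (P₁ : H →ₗ[ℂ] H)) (hH₂ : H₂ = LinearMap.range (P₂ : H →ₗ[ℂ] H))
    (hinv₁ : ∀ b ∈ B, ∀ x ∈ H₁, b x ∈ H₁) (hinv₂ : ∀ b ∈ B, ∀ x ∈ H₂, b x ∈ H₂)
    (hirr₁ : ∀ K : Submodule ℂ H, IsClosed (K : Set H) → K ≤ H₁ →
      (∀ b ∈ B, ∀ x ∈ K, b x ∈ K) → K = ⊥ ∨ K = H₁)
    (hirr₂ : ∀ K : Submodule ℂ H, IsClosed (K : Set H) → K ≤ H₂ →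
      (∀ b ∈ B, ∀ x ∈ K, b x ∈ K) → K = ⊥ ∨ K = H₂)
    (hdistinct : ¬ ∃ U : H₁ ≃ₗᵢ[ℂ] H₂,
      ∀ (b : H →L[ℂ] H) (hb : b ∈ B) (x : H₁),
        (U ⟨b x, hinv₁ b hb x.1 x.2⟩ : H) = b (U x : H)) :
    ∀ x ∈ H₁, ∀ y ∈ H₂, @inner ℂ H _ x y = 0 := by
  classical
  have hP₁fix : ∀ z : H, z ∈ H₁ ↔ P₁ z = z := by
    intro z
    rw [hH₁]
    constructor
    · rintro ⟨w, rfl⟩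
      calc P₁ (P₁ w) = (P₁ * P₁) w := rfl
      _ = P₁ w := by rw [hP₁idem]
    · intro h; exact ⟨z, h⟩
  have hP₂fix : ∀ z : H, z ∈ H₂ ↔ P₂ z = z := by
    intro z
    rw [hH₂]
    constructor
    · rintro ⟨w, rfl⟩
      calc P₂ (P₂ w) = (P₂ * P₂) w := rfl
      _ = P₂ w := by rw [hP₂idem]
    · intro h; exact ⟨z, h⟩
  have hH₁c : IsClosed (H₁ : Set H) := by
    have hset : (H₁ : Set H) = {z | P₁ z = z} := Set.ext fun z => hP₁fix z
    rw [hset]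
    exact isClosed_eq P₁.continuous continuous_id
  haveI : CompleteSpace H₁ := hH₁c.completeSpace_coe
  suffices hz : ∀ v : H, v ∈ H₁ → P₂ v = 0 by
    intro x hx y hy
    have hy' : P₂ y = y := (hP₂fix y).mp hy
    calc (inner ℂ x y : ℂ) = inner ℂ x (P₂ y) := by rw [hy']
    _ = inner ℂ (adjoint P₂ x) y := (adjoint_inner_left P₂ y x).symm
    _ = 0 := by rw [hP₂sa, hz x hx, inner_zero_left]
  by_contra hcon
  push_neg at hcon
  obtain ⟨v, hv₁, hv₂⟩ := hcon
  -- the operator S = (P₁ ∘ P₂) restricted to H₁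
  have hinvS : ∀ z ∈ H₁, (P₁ * P₂) z ∈ H₁ := by
    intro z _
    rw [hH₁]
    exact ⟨P₂ z, rfl⟩
  set S : H₁ →L[ℂ] H₁ := auxRestrict H₁ (P₁ * P₂) hinvS with hSdef
  have hSapply : ∀ z : H₁, (S z : H) = P₁ (P₂ z) := fun z => rfl
  have hSself : IsSelfAdjoint S := by
    rw [ContinuousLinearMap.isSelfAdjoint_iff']
    symm
    rw [eq_adjoint_iff]
    intro x y
    rw [Submodule.coe_inner, Submodule.coe_inner, hSapply, hSapply]
    have hx' : P₁ (x:H) = x := (hP₁fix x).mp x.2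
    have hy' : P₁ (y:H) = y := (hP₁fix y).mp y.2
    calc (inner ℂ (P₁ (P₂ (x:H))) (y:H) : ℂ)
        = inner ℂ (adjoint P₁ (P₂ (x:H))) (y:H) := by rw [hP₁sa]
      _ = inner ℂ ((P₂ (x:H))) (P₁ (y:H)) := adjoint_inner_left P₁ (y:H) (P₂ (x:H))
      _ = inner ℂ ((P₂ (x:H))) (y:H) := by rw [hy']
      _ = inner ℂ (adjoint P₂ (x:H)) (y:H) := by rw [hP₂sa]
      _ = inner ℂ ((x:H)) (P₂ (y:H)) := adjoint_inner_left P₂ (y:H) (x:H)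
      _ = inner ℂ (P₁ (x:H)) (P₂ (y:H)) := by rw [hx']
      _ = inner ℂ (adjoint P₁ (x:H)) (P₂ (y:H)) := by rw [hP₁sa]
      _ = inner ℂ ((x:H)) (P₁ (P₂ (y:H))) := adjoint_inner_left P₁ (P₂ (y:H)) (x:H)
  haveI hSnormal : IsStarNormal S := ⟨by rw [hSself.star_eq]⟩
  have hres_comm : ∀ (b : H →L[ℂ] H) (hb : b ∈ B),
      (auxRestrict H₁ b fun z hz => hinv₁ b hb z hz) * S
        = S * (auxRestrict H₁ b fun z hz => hinv₁ b hb z hz) := by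
    intro b hb
    have h : b * (P₁ * P₂) = (P₁ * P₂) * b := by
      calc b * (P₁ * P₂) = (b * P₁) * P₂ := (mul_assoc _ _ _).symm
        _ = (P₁ * b) * P₂ := by rw [hP₁comm b hb]
        _ = P₁ * (b * P₂) := mul_assoc _ _ _
        _ = P₁ * (P₂ * b) := by rw [hP₂comm b hb]
        _ = (P₁ * P₂) * b := (mul_assoc _ _ _).symm
    exact auxRestrict_comm H₁ b (P₁ * P₂) _ hinvS h
  have hres_star : ∀ (b : H →L[ℂ] H) (hb : b ∈ B),
      star (auxRestrict H₁ b fun z hz => hinv₁ b hb z hz)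
        = auxRestrict H₁ (star b) (fun z hz => hinv₁ (star b) (star_mem hb) z hz) := by
    intro b hb
    have hb' : ∀ z ∈ H₁, adjoint b z ∈ H₁ := by
      intro z hz
      have := hinv₁ (star b) (star_mem hb) z hz
      rwa [ContinuousLinearMap.star_eq_adjoint] at this
    rw [ContinuousLinearMap.star_eq_adjoint, auxRestrict_adjoint H₁ b _ hb']
    ext z
    show adjoint b (z:H) = star b (z:H)
    rw [ContinuousLinearMap.star_eq_adjoint]
  have hv0 : v ≠ 0 := by
    rintro rfl
    exact hv₂ (map_zero P₂)
  have hnt : Nontrivial (H₁ →L[ℂ] H₁) := by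
    refine ⟨1, 0, fun h => ?_⟩
    have h1 := DFunLike.congr_fun h (⟨v, hv₁⟩ : H₁)
    rw [ContinuousLinearMap.one_apply, ContinuousLinearMap.zero_apply] at h1
    have h2 := congrArg Subtype.val h1
    simp only [ZeroMemClass.coe_zero] at h2
    exact hv0 h2
  set Γ : Set (H₁ →L[ℂ] H₁) :=
    {T | ∃ b, ∃ hb : b ∈ B, T = auxRestrict H₁ b fun z hz => hinv₁ b hb z hz} with hΓ
  have hstar : ∀ T ∈ Γ, star T ∈ Γ := by
    rintro T ⟨b, hb, rfl⟩
    exact ⟨star b, star_mem hb, hres_star b hb⟩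
  have hScommΓ : ∀ T ∈ Γ, T * S = S * T := by
    rintro T ⟨b, hb, rfl⟩
    exact hres_comm b hb
  have hone : ∀ A C : H₁ →L[ℂ] H₁, (∀ T ∈ Γ, T * C = C * T) → C ≠ 0 → A * C = 0 → A = 0 := by
    intro Acf Ccf hCcomm hC hAC
    set K : Submodule ℂ H := (LinearMap.range (H₁.subtypeL.comp Ccf : H₁ →ₗ[ℂ] H)).topologicalClosure with hK
    have hKclosed : IsClosed (K : Set H) := Submodule.isClosed_topologicalClosure _
    have hrange_le : LinearMap.range (H₁.subtypeL.comp Ccf : H₁ →ₗ[ℂ] H) ≤ H₁ := by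
      rintro w ⟨u, rfl⟩
      exact (Ccf u).2
    have hKle : K ≤ H₁ := Submodule.topologicalClosure_minimal _ hrange_le hH₁c
    have hrange_sub : ∀ (b : H →L[ℂ] H), b ∈ B →
        b '' ((LinearMap.range (H₁.subtypeL.comp Ccf : H₁ →ₗ[ℂ] H) : Submodule ℂ H) : Set H)
          ⊆ ((LinearMap.range (H₁.subtypeL.comp Ccf : H₁ →ₗ[ℂ] H) : Submodule ℂ H) : Set H) := by
      rintro b hb w ⟨w', hw', rfl⟩
      obtain ⟨u, rfl⟩ := hw'
      have h1 := DFunLike.congr_fun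
        (hCcomm (auxRestrict H₁ b fun z hz => hinv₁ b hb z hz) ⟨b, hb, rfl⟩) u
      rw [ContinuousLinearMap.mul_apply, ContinuousLinearMap.mul_apply] at h1
      have h2 := congrArg Subtype.val h1
      refine ⟨(auxRestrict H₁ b fun z hz => hinv₁ b hb z hz) u, ?_⟩
      show (Ccf _ : H) = b ((Ccf u : H))
      rw [← h2]
      rfl
    have hKinv : ∀ b ∈ B, ∀ w ∈ K, b w ∈ K := by
      intro b hb w hw
      have hw' : w ∈ closure ((LinearMap.range (H₁.subtypeL.comp Ccf : H₁ →ₗ[ℂ] H) : Submodule ℂ H) : Set H) := hw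
      have h2 : b w ∈ b '' closure ((LinearMap.range (H₁.subtypeL.comp Ccf : H₁ →ₗ[ℂ] H) : Submodule ℂ H) : Set H) :=
        ⟨w, hw', rfl⟩
      have h3 := image_closure_subset_closure_image b.continuous h2
      exact closure_mono (hrange_sub b hb) h3
    rcases hirr₁ K hKclosed hKle hKinv with hKbot | hKtop
    · exfalso
      apply hC
      ext u
      have hmem : (Ccf u : H) ∈ K :=
        Submodule.le_topologicalClosure _ ⟨u, rfl⟩
      rw [hKbot, Submodule.mem_bot] at hmem
      show ((Ccf u : H₁) : H) = ((0 : H₁ →L[ℂ] H₁) u : H)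
      simpa using hmem
    · ext u
      have hu : (u : H) ∈ (K : Set H) := by
        rw [hKtop]
        exact u.2
      have hval : (K : Set H) = Subtype.val '' closure (Set.range Ccf) := by
        show closure ((LinearMap.range (H₁.subtypeL.comp Ccf : H₁ →ₗ[ℂ] H) : Submodule ℂ H) : Set H) = _
        have hs : ((LinearMap.range (H₁.subtypeL.comp Ccf : H₁ →ₗ[ℂ] H) : Submodule ℂ H) : Set H)
            = Subtype.val '' Set.range Ccf := by
          ext w
          constructor
          · rintro ⟨u', rfl⟩
            exact ⟨Ccf u', ⟨u', rfl⟩, rfl⟩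
          · rintro ⟨z, ⟨u', rfl⟩, rfl⟩
            exact ⟨u', rfl⟩
        rw [hs]
        exact Topology.IsClosedEmbedding.closure_image_eq hH₁c.isClosedEmbedding_subtypeVal (Set.range Ccf)
      rw [hval] at hu
      obtain ⟨w, hw, hwu⟩ := hu
      have huw : w = u := Subtype.ext hwu
      rw [huw] at hw
      have hzs : Set.range Ccf ⊆ {z : H₁ | Acf z = 0} := by
        rintro _ ⟨u', rfl⟩
        show Acf (Ccf u') = 0
        have h4 := DFunLike.congr_fun hAC u'
        rwa [ContinuousLinearMap.mul_apply, ContinuousLinearMap.zero_apply] at h4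
      have h5 := closure_minimal hzs (isClosed_eq Acf.continuous continuous_const) hw
      simpa using h5
  obtain ⟨μ, hSeq⟩ := aux_schur hnt S hSself Γ hstar hScommΓ hone
  have hnorm : ∀ z : H₁, (inner ℂ (P₂ (z:H)) (P₂ (z:H)) : ℂ) = μ * inner ℂ (z:H) (z:H) := by
    intro z
    have hz' : P₁ (z:H) = z := (hP₁fix z).mp z.2
    have hSz : P₁ (P₂ (z:H)) = μ • (z:H) := by
      have h1 := congrArg Subtype.val (DFunLike.congr_fun hSeq z)
      rw [hSapply] at h1
      rw [h1]
      simp [Algebra.algebraMap_eq_smul_one]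
    have hPP : P₂ (P₂ (z:H)) = P₂ (z:H) := by
      calc P₂ (P₂ (z:H)) = (P₂ * P₂) (z:H) := rfl
        _ = P₂ (z:H) := by rw [hP₂idem]
    calc (inner ℂ (P₂ (z:H)) (P₂ (z:H)) : ℂ)
        = inner ℂ (adjoint P₂ (z:H)) (P₂ (z:H)) := by rw [hP₂sa]
      _ = inner ℂ ((z:H)) (P₂ (P₂ (z:H))) := adjoint_inner_left P₂ (P₂ (z:H)) (z:H)
      _ = inner ℂ ((z:H)) (P₂ (z:H)) := by rw [hPP]
      _ = inner ℂ (P₁ (z:H)) (P₂ (z:H)) := by rw [hz']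
      _ = inner ℂ (adjoint P₁ (z:H)) (P₂ (z:H)) := by rw [hP₁sa]
      _ = inner ℂ ((z:H)) (P₁ (P₂ (z:H))) := adjoint_inner_left P₁ (P₂ (z:H)) (z:H)
      _ = inner ℂ ((z:H)) (μ • (z:H)) := by rw [hSz]
      _ = μ * inner ℂ (z:H) (z:H) := inner_smul_right _ _ _
  have hvn : ‖v‖ ≠ 0 := norm_ne_zero_iff.mpr hv0
  set t : ℝ := ‖P₂ v‖^2 / ‖v‖^2 with ht
  have htpos : 0 < t := by
    apply div_pos
    · have : 0 < ‖P₂ v‖ := norm_pos_iff.mpr hv₂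
      positivity
    · have : 0 < ‖v‖ := norm_pos_iff.mpr hv0
      positivity
  have hveq : (‖P₂ v‖:ℂ)^2 = μ * (‖v‖:ℂ)^2 := by
    have h1 := hnorm ⟨v, hv₁⟩
    rw [inner_self_eq_norm_sq_to_K, inner_self_eq_norm_sq_to_K] at h1
    exact_mod_cast h1
  have hμt : μ = (t : ℂ) := by
    have hvC : ((‖v‖:ℂ)) ≠ 0 := by exact_mod_cast hvn
    rw [ht]
    push_cast
    rw [eq_div_iff (pow_ne_zero 2 hvC)]
    linear_combination -hveq
  have hnormr : ∀ z : H₁, ‖P₂ (z:H)‖^2 = t * ‖(z:H)‖^2 := by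
    intro z
    have h1 := hnorm z
    rw [hμt, inner_self_eq_norm_sq_to_K, inner_self_eq_norm_sq_to_K] at h1
    have h2 : ((‖P₂ (z:H)‖^2 : ℝ) : ℂ) = ((t * ‖(z:H)‖^2 : ℝ) : ℂ) := by
      push_cast
      exact h1
    exact_mod_cast h2
  set c : ℝ := Real.sqrt t with hc
  have hcpos : 0 < c := Real.sqrt_pos.mpr htpos
  have hc2 : c^2 = t := Real.sq_sqrt htpos.le
  set Jc : H₁ →L[ℂ] H := ((c:ℂ)⁻¹) • (P₂.comp H₁.subtypeL) with hJc
  have hJcapply : ∀ z : H₁, Jc z = (c:ℂ)⁻¹ • P₂ (z:H) := fun z => rfl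
  have hJnorm : ∀ z : H₁, ‖Jc z‖ = ‖z‖ := by
    intro z
    rw [hJcapply z, norm_smul]
    have h2 : ‖P₂ (z:H)‖ = c * ‖(z:H)‖ := by
      rw [← Real.sqrt_sq (norm_nonneg (P₂ (z:H))), hnormr z,
        show t * ‖(z:H)‖^2 = (c * ‖(z:H)‖)^2 by rw [mul_pow, hc2],
        Real.sqrt_sq (by positivity)]
    rw [h2]
    have h3 : ‖((c:ℂ))⁻¹‖ = c⁻¹ := by
      rw [norm_inv]
      simp [abs_of_pos hcpos]
    rw [h3, inv_mul_cancel_left₀ (ne_of_gt hcpos)]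
    rfl
  set M : Submodule ℂ H := LinearMap.range (Jc : H₁ →ₗ[ℂ] H) with hM
  have hMset : (M : Set H) = Set.range Jc := by
    ext w
    simp [hM]
  have hMclosed : IsClosed (M : Set H) := by
    have hiso : Isometry Jc := AddMonoidHomClass.isometry_of_norm Jc hJnorm
    rw [hMset]
    exact hiso.isClosedEmbedding.isClosed_range
  have hMle : M ≤ H₂ := by
    rintro w ⟨u, rfl⟩
    show Jc u ∈ H₂
    rw [hJcapply, hH₂]
    exact Submodule.smul_mem _ _ ⟨(u:H), rfl⟩
  have hMinv : ∀ b ∈ B, ∀ w ∈ M, b w ∈ M := by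
    rintro b hb w ⟨u, rfl⟩
    refine ⟨⟨b u, hinv₁ b hb (u:H) u.2⟩, ?_⟩
    show Jc _ = b (Jc u)
    rw [hJcapply, hJcapply]
    show (c:ℂ)⁻¹ • P₂ (b (u:H)) = b ((c:ℂ)⁻¹ • P₂ (u:H))
    rw [map_smul]
    congr 1
    calc P₂ (b (u:H)) = (P₂ * b) (u:H) := rfl
      _ = (b * P₂) (u:H) := by rw [hP₂comm b hb]
      _ = b (P₂ (u:H)) := rfl
  have hMne : M ≠ ⊥ := by
    intro h
    have h1 : Jc ⟨v, hv₁⟩ ∈ M := ⟨⟨v, hv₁⟩, rfl⟩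
    rw [h, Submodule.mem_bot] at h1
    rw [hJcapply] at h1
    rcases smul_eq_zero.mp h1 with h2 | h2
    · exact (inv_ne_zero (by exact_mod_cast ne_of_gt hcpos)) h2
    · exact hv₂ h2
  rcases hirr₂ M hMclosed hMle hMinv with h | hMtop
  · exact hMne h
  have hmemH₂ : ∀ z : H₁, Jc z ∈ H₂ := fun z => hMle ⟨z, rfl⟩
  set V : H₁ →ₗᵢ[ℂ] H₂ :=
    ⟨LinearMap.codRestrict H₂ (Jc : H₁ →ₗ[ℂ] H) hmemH₂, fun z => by
      rw [← hJnorm z]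
      rfl⟩ with hV
  have hVcoe : ∀ z : H₁, ((V z : H₂) : H) = Jc z := fun z => rfl
  have hVsurj : Function.Surjective V := by
    intro w
    have hw : (w : H) ∈ M := by
      rw [hMtop]
      exact w.2
    obtain ⟨u, hu⟩ := hw
    exact ⟨u, Subtype.ext (by rw [hVcoe]; exact hu)⟩
  refine absurd ⟨LinearIsometryEquiv.ofSurjective V hVsurj, fun b hb x => ?_⟩ hdistinct
  have hUcoe : ∀ z : H₁, ((LinearIsometryEquiv.ofSurjective V hVsurj z : H₂) : H) = Jc z :=
    fun z => rfl
  rw [hUcoe, hUcoe, hJcapply, hJcapply]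
  rw [map_smul]
  congr 1
  calc P₂ (b (x:H)) = (P₂ * b) (x:H) := rfl
    _ = (b * P₂) (x:H) := by rw [hP₂comm b hb]
    _ = b (P₂ (x:H)) := rfl
end
end

section
/- Let α be a partial action of a discrete group G on a C*-algebra A and let L = {a ∈ ℓ¹(G, A) : a(g) ∈ D_g for all g}, equipped with the convolution product (a * b)(g) = Σ_{h∈G} α_h[α_{h⁻¹}(a(h)) · b(h⁻¹g)] and involution a*(g) = α_g(a(g⁻¹)*). Then the involution is isometric and satisfies (a * b)* = b* * a*, so L is a Banach *-algebra. -/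
noncomputable section

/-- A partial action of a discrete group `G` on a (C*-)algebra `A`: a family of closed
two-sided (star-closed) ideals `D g` together with *-isomorphisms `α g : D g⁻¹ ≃ D g`
satisfying `α g (D g⁻¹ ∩ D h) ⊆ D (g h)`, `α (h g) = α h ∘ α g` on the appropriate domain,
`D 1 = A` and `α 1 = id`. -/
structure PartialAction (G : Type) [Group G] (A : Type) [NonUnitalNormedRing A]
    [StarRing A] [NormedSpace ℂ A] [IsScalarTower ℂ A A] [SMulCommClass ℂ A A]
    [StarModule ℂ A] where
  D : G → NonUnitalStarSubalgebra ℂ A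
  closed : ∀ g, IsClosed (D g : Set A)
  idealL : ∀ g, ∀ a : A, ∀ d ∈ D g, a * d ∈ D g
  idealR : ∀ g, ∀ a : A, ∀ d ∈ D g, d * a ∈ D g
  α : ∀ g : G, ↥(D g⁻¹) ≃⋆ₐ[ℂ] ↥(D g)
  D_one : D (1 : G) = ⊤
  α_one : ∀ d : ↥(D (1 : G)⁻¹), ((α 1 d : A)) = (d : A)
  mapsInto : ∀ g h : G, ∀ d : ↥(D g⁻¹), (d : A) ∈ D h → ((α g d : A)) ∈ D (g * h)
  comp : ∀ h g : G, ∀ d : ↥(D g⁻¹), ∀ hd : (d : A) ∈ D ((h * g)⁻¹),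
    ∀ hd2 : ((α g d : A)) ∈ D h⁻¹,
    ((α (h * g) ⟨(d : A), hd⟩ : A)) = ((α h ⟨(α g d : A), hd2⟩ : A))

variable {G : Type} [Group G] {A : Type} [NonUnitalCStarAlgebra A]
  [NormedSpace ℂ A] [IsScalarTower ℂ A A] [SMulCommClass ℂ A A] [StarModule ℂ A]

/-- The involution `a*(g) = α_g (a(g⁻¹)*)` on `L = {a ∈ ℓ¹(G,A) : a(g) ∈ D_g}`. -/
def LStar (θ : PartialAction G A) (a : G → A) (ha : ∀ g, a g ∈ θ.D g) : G → A :=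
  fun g => (θ.α g ⟨star (a g⁻¹), star_mem (ha g⁻¹)⟩ : A)

lemma LStar_mem (θ : PartialAction G A) (a : G → A) (ha : ∀ g, a g ∈ θ.D g) (g : G) :
    LStar θ a ha g ∈ θ.D g := (θ.α g _).2

/-- The convolution `(a * b)(g) = Σ_h α_h [α_{h⁻¹}(a(h)) b(h⁻¹ g)]` on `L`. -/
def LConv (θ : PartialAction G A) (a b : G → A) (ha : ∀ g, a g ∈ θ.D g) : G → A :=
  fun g => ∑' h : G,
    (θ.α h ⟨((θ.α h⁻¹ ⟨a h, by rw [inv_inv]; exact ha h⟩ : A)) * b (h⁻¹ * g),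
      θ.idealR h⁻¹ (b (h⁻¹ * g)) _ (θ.α h⁻¹ ⟨a h, by rw [inv_inv]; exact ha h⟩).2⟩ : A)

namespace PartialAction

instance (S : NonUnitalStarSubalgebra ℂ A) : CStarRing ↥S :=
  ⟨fun {x} => by simpa using (CStarRing.norm_star_mul_self (x := (x : A))).ge⟩

def cstarD (θ : PartialAction G A) (g : G) : NonUnitalCStarAlgebra ↥(θ.D g) :=
  { toCompleteSpace := (θ.closed g).completeSpace_coe }

variable (θ : PartialAction G A)

def apA (g : G) (x : A) (hx : x ∈ θ.D g⁻¹) : A := (θ.α g ⟨x, hx⟩ : A)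

lemma apA_mem (g : G) (x : A) (hx : x ∈ θ.D g⁻¹) : θ.apA g x hx ∈ θ.D g := (θ.α g ⟨x, hx⟩).2

lemma norm_apA (g : G) (x : A) (hx : x ∈ θ.D g⁻¹) : ‖θ.apA g x hx‖ = ‖x‖ := by
  letI := θ.cstarD g⁻¹; letI := θ.cstarD g
  exact NonUnitalStarAlgHom.norm_map (θ.α g) (θ.α g).injective ⟨x, hx⟩

lemma apA_congr {g g' : G} {x x' : A} (hg : g = g') (hx : x = x') {h1 : x ∈ θ.D g⁻¹}
    {h2 : x' ∈ θ.D g'⁻¹} : θ.apA g x h1 = θ.apA g' x' h2 := by subst hg; subst hx; rfl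

lemma apA_one (x : A) (h1 : x ∈ θ.D (1:G)⁻¹) : θ.apA 1 x h1 = x := θ.α_one ⟨x, h1⟩

lemma apA_star (g : G) (x : A) (hx : x ∈ θ.D g⁻¹) (hx' : star x ∈ θ.D g⁻¹) :
    θ.apA g (star x) hx' = star (θ.apA g x hx) := by
  have : (⟨star x, hx'⟩ : ↥(θ.D g⁻¹)) = star ⟨x, hx⟩ := rfl
  rw [apA, this, map_star]; rfl

lemma apA_comp (h g : G) (x : A) (hx : x ∈ θ.D g⁻¹) (hd : x ∈ θ.D (h*g)⁻¹)
    (hd2 : θ.apA g x hx ∈ θ.D h⁻¹) :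
    θ.apA (h*g) x hd = θ.apA h (θ.apA g x hx) hd2 := θ.comp h g ⟨x, hx⟩ hd hd2

lemma apA_cancel (g : G) (x : A) (hx : x ∈ θ.D g⁻¹) (hd2 : θ.apA g x hx ∈ θ.D (g⁻¹)⁻¹) :
    θ.apA g⁻¹ (θ.apA g x hx) hd2 = x := by
  have hd : x ∈ θ.D (g⁻¹ * g)⁻¹ := by simp [θ.D_one]
  have h1 : x ∈ θ.D (1:G)⁻¹ := by simp [θ.D_one]
  rw [← θ.apA_comp g⁻¹ g x hx hd hd2,
    θ.apA_congr (inv_mul_cancel g) rfl (h2 := h1), θ.apA_one]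

lemma tsum_mem_D {ι : Type} (g : G) (f : ι → A) (hf : ∀ i, f i ∈ θ.D g) :
    (∑' i, f i) ∈ θ.D g := by
  by_cases hs : Summable f
  · exact (θ.closed g).mem_of_tendsto hs.hasSum
      (Filter.Eventually.of_forall fun s => sum_mem fun i _ => hf i)
  · rw [tsum_eq_zero_of_not_summable hs]; exact zero_mem _

lemma hasSum_apA {ι : Type} (g : G) (f : ι → A) (hf : ∀ i, f i ∈ θ.D g⁻¹) {s : A}
    (hs : HasSum f s) (hsm : s ∈ θ.D g⁻¹) :
    HasSum (fun i => θ.apA g (f i) (hf i)) (θ.apA g s hsm) := by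
  have hind : Topology.IsInducing ((θ.D g⁻¹).subtype) := Topology.IsInducing.subtypeVal
  have h1 : HasSum (fun i => (⟨f i, hf i⟩ : ↥(θ.D g⁻¹))) ⟨s, hsm⟩ :=
    (hind.hasSum_iff (fun i => (⟨f i, hf i⟩ : ↥(θ.D g⁻¹))) ⟨s, hsm⟩).mp hs
  have hcont : Continuous (θ.α g) := by
    letI := θ.cstarD g⁻¹; letI := θ.cstarD g
    exact (NonUnitalStarAlgHom.isometry (θ.α g) (θ.α g).injective).continuous
  have h2 := (h1.map (θ.α g : ↥(θ.D g⁻¹) →⋆ₙₐ[ℂ] ↥(θ.D g)) hcont)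
  exact h2.map ((θ.D g).subtype) continuous_subtype_val

lemma apA_tsum {ι : Type} (g : G) (f : ι → A) (hf : ∀ i, f i ∈ θ.D g⁻¹) (hs : Summable f)
    (hsm : (∑' i, f i) ∈ θ.D g⁻¹) :
    θ.apA g (∑' i, f i) hsm = ∑' i, θ.apA g (f i) (hf i) :=
  (θ.hasSum_apA g f hf hs.hasSum hsm).tsum_eq.symm

end PartialAction

/-- on `L = {a ∈ ℓ¹(G,A) : a(g) ∈ D_g}` with the convolution product and
involution `a*(g) = α_g(a(g⁻¹)*)`, the involution is isometric and anti-multiplicative,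
the convolution stays in `L` and is ℓ¹-submultiplicative; so `L` is a Banach *-algebra. -/
theorem L_isBanachStarAlgebra (θ : PartialAction G A) (a b : G → A)
    (ha : ∀ g, a g ∈ θ.D g) (hb : ∀ g, b g ∈ θ.D g)
    (sa : Summable fun g => ‖a g‖) (sb : Summable fun g => ‖b g‖) :
    (∑' g, ‖LStar θ a ha g‖) = (∑' g, ‖a g‖) ∧
    (∀ g, LConv θ a b ha g ∈ θ.D g) ∧
    (∑' g, ‖LConv θ a b ha g‖) ≤ (∑' g, ‖a g‖) * (∑' g, ‖b g‖) ∧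
    (∀ hc : ∀ g, LConv θ a b ha g ∈ θ.D g, ∀ g : G,
      LStar θ (LConv θ a b ha) hc g
        = LConv θ (LStar θ b hb) (LStar θ a ha) (LStar_mem θ b hb) g) := by
  classical
  -- setup
  have pf1 : ∀ h : G, a h ∈ θ.D h⁻¹⁻¹ := fun h => by rw [inv_inv]; exact ha h
  set w : G → G → A := fun g h => θ.apA h⁻¹ (a h) (pf1 h) * b (h⁻¹ * g) with hwdef
  have hw1 : ∀ g h, w g h ∈ θ.D h⁻¹ :=
    fun g h => θ.idealR h⁻¹ _ _ (θ.apA_mem h⁻¹ (a h) (pf1 h))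
  set T : G → G → A := fun g h => θ.apA h (w g h) (hw1 g h) with hTdef
  have hLC : ∀ g, LConv θ a b ha g = ∑' h, T g h := fun g => rfl
  have hTnorm : ∀ g h, ‖T g h‖ ≤ ‖a h‖ * ‖b (h⁻¹ * g)‖ := by
    intro g h
    rw [hTdef]
    dsimp only
    rw [θ.norm_apA]
    exact (norm_mul_le _ _).trans (by rw [θ.norm_apA])
  have hTmem : ∀ g h, T g h ∈ θ.D g := by
    intro g h
    have h2 : w g h ∈ θ.D (h⁻¹ * g) := θ.idealL _ _ _ (hb (h⁻¹ * g))
    have := θ.mapsInto h (h⁻¹ * g) ⟨w g h, hw1 g h⟩ h2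
    rwa [mul_inv_cancel_left] at this
  -- summability infrastructure
  have base : Summable (fun q : G × G => ‖a q.1‖ * ‖b q.2‖) :=
    sa.mul_of_nonneg sb (fun _ => norm_nonneg _) (fun _ => norm_nonneg _)
  set e : G × G ≃ G × G :=
    ⟨fun q => (q.1 * q.2, q.1), fun p => (p.2, p.2⁻¹ * p.1),
      fun q => by simp, fun p => by simp⟩ with hedef
  have hF : Summable (fun p : G × G => ‖a p.2‖ * ‖b (p.2⁻¹ * p.1)‖) := by
    apply e.summable_iff.mp
    have hce : ((fun p : G × G => ‖a p.2‖ * ‖b (p.2⁻¹ * p.1)‖) ∘ e)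
        = fun q : G × G => ‖a q.1‖ * ‖b q.2‖ := by
      funext q; simp [hedef]
    rw [hce]; exact base
  have hTnsum : ∀ g, Summable (fun h => ‖T g h‖) := fun g =>
    Summable.of_nonneg_of_le (fun _ => norm_nonneg _) (hTnorm g) (hF.prod_factor g)
  have hTsum : ∀ g, Summable (fun h => T g h) := fun g => (hTnsum g).of_norm
  -- Part 1
  have part1 : (∑' g, ‖LStar θ a ha g‖) = (∑' g, ‖a g‖) := by
    have h1 : ∀ g : G, ‖LStar θ a ha g‖ = ‖a g⁻¹‖ := fun g => by
      show ‖θ.apA g (star (a g⁻¹)) (star_mem (ha g⁻¹))‖ = _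
      rw [θ.norm_apA, norm_star]
    rw [tsum_congr h1]
    simpa using (Equiv.inv G).tsum_eq (fun g => ‖a g‖)
  -- Part 2
  have part2 : ∀ g, LConv θ a b ha g ∈ θ.D g := fun g => by
    rw [hLC]; exact θ.tsum_mem_D g _ (hTmem g)
  -- Part 3
  have part3 : (∑' g, ‖LConv θ a b ha g‖) ≤ (∑' g, ‖a g‖) * (∑' g, ‖b g‖) := by
    have hnc : ∀ g, ‖LConv θ a b ha g‖ ≤ ∑' h, ‖a h‖ * ‖b (h⁻¹ * g)‖ := fun g => by
      rw [hLC]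
      exact (norm_tsum_le_tsum_norm (hTnsum g)).trans
        (Summable.tsum_le_tsum (hTnorm g) (hTnsum g) (hF.prod_factor g))
    have hsc : Summable (fun g => ‖LConv θ a b ha g‖) :=
      Summable.of_nonneg_of_le (fun _ => norm_nonneg _) hnc hF.prod
    calc (∑' g, ‖LConv θ a b ha g‖)
        ≤ ∑' g, ∑' h, ‖a h‖ * ‖b (h⁻¹ * g)‖ := Summable.tsum_le_tsum hnc hsc hF.prod
      _ = ∑' p : G × G, ‖a p.2‖ * ‖b (p.2⁻¹ * p.1)‖ := (Summable.tsum_prod hF).symm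
      _ = ∑' q : G × G, ‖a q.1‖ * ‖b q.2‖ := by
          rw [← e.tsum_eq (fun p : G × G => ‖a p.2‖ * ‖b (p.2⁻¹ * p.1)‖)]
          exact tsum_congr fun q => by simp [hedef]
      _ = ∑' h, ‖a h‖ * ∑' k, ‖b k‖ := by
          rw [Summable.tsum_prod base]
          exact tsum_congr fun h => by
            simpa using tsum_mul_left (a := ‖a h‖) (f := fun k => ‖b k‖)
      _ = (∑' g, ‖a g‖) * (∑' g, ‖b g‖) := tsum_mul_right
  refine ⟨part1, part2, part3, ?_⟩
  -- Part 4
  intro hc g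
  have q1 : ∀ k : G, LStar θ b hb k ∈ θ.D k⁻¹⁻¹ := fun k => by
    rw [inv_inv]; exact LStar_mem θ b hb k
  have q2 : ∀ k : G, θ.apA k⁻¹ (LStar θ b hb k) (q1 k) * LStar θ a ha (k⁻¹ * g) ∈ θ.D k⁻¹ :=
    fun k => θ.idealR k⁻¹ _ _ (θ.apA_mem k⁻¹ _ (q1 k))
  set Rf : G → A := fun k =>
    θ.apA k (θ.apA k⁻¹ (LStar θ b hb k) (q1 k) * LStar θ a ha (k⁻¹ * g)) (q2 k) with hRdef
  have hR : LConv θ (LStar θ b hb) (LStar θ a ha) (LStar_mem θ b hb) g = ∑' k, Rf k := rfl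
  set s : G → A := fun h => T g⁻¹ h with hsdef
  have hs_mem : ∀ h, s h ∈ θ.D g⁻¹ := hTmem g⁻¹
  have hs_sum : Summable s := hTsum g⁻¹
  have mem' : (∑' h, star (s h)) ∈ θ.D g⁻¹ :=
    θ.tsum_mem_D g⁻¹ _ (fun h => star_mem (hs_mem h))
  -- termwise identity
  have termwise : ∀ h : G, θ.apA g (star (s h)) (star_mem (hs_mem h)) = Rf (g * h) := by
    intro h
    have m1 : star (w g⁻¹ h) ∈ θ.D h⁻¹ := star_mem (hw1 g⁻¹ h)
    have mδ : star (w g⁻¹ h) ∈ θ.D (g * h)⁻¹ := by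
      rw [mul_inv_rev]
      exact star_mem (θ.idealL _ _ _ (hb (h⁻¹ * g⁻¹)))
    have hd2 : θ.apA h (star (w g⁻¹ h)) m1 ∈ θ.D g⁻¹ := by
      have hmem2 : star (w g⁻¹ h) ∈ θ.D (h⁻¹ * g⁻¹) :=
        star_mem (θ.idealL _ _ _ (hb (h⁻¹ * g⁻¹)))
      have := θ.mapsInto h (h⁻¹ * g⁻¹) ⟨star (w g⁻¹ h), m1⟩ hmem2
      rwa [mul_inv_cancel_left] at this
    have stepA : star (s h) = θ.apA h (star (w g⁻¹ h)) m1 :=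
      (θ.apA_star h (w g⁻¹ h) (hw1 g⁻¹ h) m1).symm
    have e1 : θ.apA g (star (s h)) (star_mem (hs_mem h))
        = θ.apA g (θ.apA h (star (w g⁻¹ h)) m1) hd2 := θ.apA_congr rfl stepA
    have e2 : θ.apA (g * h) (star (w g⁻¹ h)) mδ
        = θ.apA g (θ.apA h (star (w g⁻¹ h)) m1) hd2 :=
      θ.apA_comp g h (star (w g⁻¹ h)) m1 mδ hd2
    -- now identify `star (w g⁻¹ h)` with the argument of `Rf (g*h)`
    have f1 : θ.apA (g * h)⁻¹ (LStar θ b hb (g * h)) (q1 (g * h)) = star (b ((g * h)⁻¹)) :=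
      θ.apA_cancel (g * h) (star (b ((g * h)⁻¹))) (star_mem (hb (g * h)⁻¹)) (q1 (g * h))
    have hk' : (g * h)⁻¹ * g = h⁻¹ := by group
    have hk'' : ((g * h)⁻¹ * g)⁻¹ = h := by group
    have f2 : LStar θ a ha ((g * h)⁻¹ * g) = star (θ.apA h⁻¹ (a h) (pf1 h)) := by
      have : LStar θ a ha ((g * h)⁻¹ * g)
          = θ.apA h⁻¹ (star (a h)) (star_mem (pf1 h)) :=
        θ.apA_congr hk' (by rw [hk''])
      rw [this]
      exact θ.apA_star h⁻¹ (a h) (pf1 h) (star_mem (pf1 h))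
    have hX : star (w g⁻¹ h)
        = θ.apA (g * h)⁻¹ (LStar θ b hb (g * h)) (q1 (g * h)) * LStar θ a ha ((g * h)⁻¹ * g) := by
      rw [f1, f2, hwdef]
      dsimp only
      rw [star_mul, mul_inv_rev]
    have e3 : θ.apA (g * h) (star (w g⁻¹ h)) mδ = Rf (g * h) := θ.apA_congr rfl hX
    rw [e1, ← e2, e3]
  -- assemble
  calc LStar θ (LConv θ a b ha) hc g
      = θ.apA g (star (LConv θ a b ha g⁻¹)) (star_mem (hc g⁻¹)) := rfl
    _ = θ.apA g (∑' h, star (s h)) mem' := θ.apA_congr rfl (by rw [hLC g⁻¹, tsum_star])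
    _ = ∑' h, θ.apA g (star (s h)) (star_mem (hs_mem h)) :=
        θ.apA_tsum g _ _ hs_sum.star mem'
    _ = ∑' h, Rf (g * h) := tsum_congr termwise
    _ = ∑' k, Rf k := (Equiv.mulLeft g).tsum_eq Rf
    _ = LConv θ (LStar θ b hb) (LStar θ a ha) (LStar_mem θ b hb) g := hR.symm
end
end

section
/- Let G be a discrete group acting on a topological space X by partial homeomorphisms t_g : X_{g⁻¹} → X_g between open subsets. The following are equivalent: (i) for every finite set {g₁,…,g_k} ⊆ G and every nonempty open U ⊆ X_{g₁⁻¹} ∩ … ∩ X_{g_k⁻¹} there is x ∈ U such that the points t_{g₁}(x), …, t_{g_k}(x) are pairwise distinct; (ii) for every finite set {g₁,…,g_n} ⊆ G with g_i ≠ e, the set ⋃_{i=1}^n Fix(g_i) has empty interior, where Fix(g) = {x ∈ X_{g⁻¹} : t_g(x) = x}. -/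
noncomputable section

/-- A partial action of a discrete group `G` on a topological space `X` by partial
homeomorphisms `t g : X_{g⁻¹} ≃ₜ X_g` between open subsets. -/
structure TopPartialAction (G : Type) [Group G] (X : Type) [TopologicalSpace X] where
  Xg : G → Set X
  isOpen : ∀ g, IsOpen (Xg g)
  t : ∀ g : G, ↥(Xg g⁻¹) ≃ₜ ↥(Xg g)
  Xg_one : Xg (1 : G) = Set.univ
  t_one : ∀ x : ↥(Xg (1 : G)⁻¹), ((t 1 x : X)) = (x : X)
  mapsInto : ∀ (g h : G) (x : ↥(Xg g⁻¹)), (x : X) ∈ Xg h → ((t g x : X)) ∈ Xg (g * h)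
  comp : ∀ (g h : G) (x : ↥(Xg h⁻¹)) (hx : (x : X) ∈ Xg (g * h)⁻¹)
    (hx2 : ((t h x : X)) ∈ Xg g⁻¹),
    ((t (g * h) ⟨(x : X), hx⟩ : X)) = ((t g ⟨(t h x : X), hx2⟩ : X))

/-- The fixed-point set `Fix(g) = {x ∈ X_{g⁻¹} : t_g(x) = x}`. -/
def TopPartialAction.Fix {G : Type} [Group G] {X : Type} [TopologicalSpace X]
    (θ : TopPartialAction G X) (g : G) : Set X :=
  {x : X | ∃ hx : x ∈ θ.Xg g⁻¹, ((θ.t g ⟨x, hx⟩ : X)) = x}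

namespace TopPartialAction

variable {G : Type} [Group G] {X : Type} [TopologicalSpace X]

lemma mem_Xg_one_inv (θ : TopPartialAction G X) (x : X) : x ∈ θ.Xg (1 : G)⁻¹ := by
  rw [inv_one, θ.Xg_one]; trivial

lemma t_congr (θ : TopPartialAction G X) {g g' : G} (h : g = g') (x : ↥(θ.Xg g⁻¹))
    (hx' : (x : X) ∈ θ.Xg g'⁻¹) : ((θ.t g x : X)) = ((θ.t g' ⟨(x : X), hx'⟩ : X)) := by
  subst h
  congr

lemma t_inv (θ : TopPartialAction G X) (g : G) (x : ↥(θ.Xg g⁻¹))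
    (z : ↥(θ.Xg g⁻¹⁻¹)) (hz : (z : X) = ((θ.t g x : X))) :
    ((θ.t g⁻¹ z : X)) = (x : X) := by
  obtain ⟨zv, zp⟩ := z
  simp only at hz
  subst hz
  have hx : (x : X) ∈ θ.Xg (g⁻¹ * g)⁻¹ := by
    rw [inv_mul_cancel, inv_one, θ.Xg_one]; trivial
  have hcomp := θ.comp g⁻¹ g x hx zp
  rw [← hcomp]
  have h1 : (x : X) ∈ θ.Xg (1 : G)⁻¹ := θ.mem_Xg_one_inv (x : X)
  rw [θ.t_congr (inv_mul_cancel g) ⟨(x : X), hx⟩ h1]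
  exact θ.t_one ⟨(x : X), h1⟩

lemma fix_of_eq (θ : TopPartialAction G X) {g g' : G} (x : X)
    (hg : x ∈ θ.Xg g⁻¹) (hg' : x ∈ θ.Xg g'⁻¹)
    (heq : ((θ.t g ⟨x, hg⟩ : X)) = ((θ.t g' ⟨x, hg'⟩ : X))) :
    x ∈ θ.Fix (g'⁻¹ * g) := by
  have hy : ((θ.t g ⟨x, hg⟩ : X)) ∈ θ.Xg g⁻¹⁻¹ := by
    rw [inv_inv]; exact (θ.t g ⟨x, hg⟩).2
  have hy' : ((θ.t g ⟨x, hg⟩ : X)) ∈ θ.Xg g' := heq ▸ (θ.t g' ⟨x, hg'⟩).2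
  have hx' : x ∈ θ.Xg (g⁻¹ * g') := by
    have hm := θ.mapsInto g⁻¹ g' ⟨_, hy⟩ hy'
    rwa [θ.t_inv g ⟨x, hg⟩ ⟨_, hy⟩ rfl] at hm
  have hx : x ∈ θ.Xg (g'⁻¹ * g)⁻¹ := by
    rw [mul_inv_rev, inv_inv]; exact hx'
  refine ⟨hx, ?_⟩
  have hy2 : ((θ.t g ⟨x, hg⟩ : X)) ∈ θ.Xg g'⁻¹⁻¹ := by rw [inv_inv]; exact hy'
  have hcomp := θ.comp g'⁻¹ g ⟨x, hg⟩ hx hy2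
  rw [hcomp]
  exact θ.t_inv g' ⟨x, hg'⟩ ⟨_, hy2⟩ heq

lemma isOpen_notFix (θ : TopPartialAction G X) [T2Space X] (g : G) :
    IsOpen {x : X | ∃ hx : x ∈ θ.Xg g⁻¹, ((θ.t g ⟨x, hx⟩ : X)) ≠ x} := by
  have h1 : IsOpen {z : ↥(θ.Xg g⁻¹) | ((θ.t g z : X)) ≠ (z : X)} :=
    isOpen_ne_fun (continuous_subtype_val.comp (θ.t g).continuous) continuous_subtype_val
  have h2 := (θ.isOpen g⁻¹).isOpenMap_subtype_val _ h1
  convert h2 using 1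
  ext x
  simp only [Set.mem_image, Set.mem_setOf_eq]
  constructor
  · rintro ⟨hx, hne⟩; exact ⟨⟨x, hx⟩, hne, rfl⟩
  · rintro ⟨⟨xv, hxv⟩, hne, rfl⟩; exact ⟨hxv, hne⟩

end TopPartialAction

/-- the two formulations of topological freedom are equivalent:
(i) for every finite `{g₁,…,g_k} ⊆ G` and nonempty open `U ⊆ ⋂ X_{gᵢ⁻¹}` there is `x ∈ U`
with the `t_{gᵢ}(x)` pairwise distinct; (ii) for every finite `{g₁,…,g_n} ⊆ G` with
`gᵢ ≠ e`, the union of the fixed-point sets `Fix(gᵢ)` has empty interior. -/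
theorem topologicallyFree_iff_fixedPoints_empty_interior
    {G : Type} [Group G] {X : Type} [TopologicalSpace X] [T2Space X] [BaireSpace X]
    (θ : TopPartialAction G X) :
    (∀ (F : Finset G) (U : Set X), IsOpen U → U.Nonempty →
        (∀ g ∈ F, U ⊆ θ.Xg g⁻¹) →
        ∃ x ∈ U, ∀ g ∈ F, ∀ g' ∈ F, g ≠ g' →
          ∀ (hg : x ∈ θ.Xg g⁻¹) (hg' : x ∈ θ.Xg g'⁻¹),
            ((θ.t g ⟨x, hg⟩ : X)) ≠ ((θ.t g' ⟨x, hg'⟩ : X))) ↔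
    (∀ F : Finset G, (∀ g ∈ F, g ≠ 1) → interior (⋃ g ∈ F, θ.Fix g) = ∅) := by
  classical
  constructor
  · intro hi
    have claim : ∀ F : Finset G, (∀ g ∈ F, g ≠ 1) →
        ∀ U : Set X, IsOpen U → U.Nonempty → ¬ (U ⊆ ⋃ g ∈ F, θ.Fix g) := by
      intro F
      induction F using Finset.induction_on with
      | empty =>
        rintro _ U _ ⟨x, hx⟩ hsub
        simpa using hsub hx
      | @insert a s ha ih =>
        intro hne U hUopen hUne hUsub
        have ha1 : a ≠ 1 := hne a (Finset.mem_insert_self a s)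
        have hs1 : ∀ g ∈ s, g ≠ 1 := fun g hg => hne g (Finset.mem_insert_of_mem hg)
        by_cases hV : (U ∩ θ.Xg a⁻¹).Nonempty
        · set V := U ∩ θ.Xg a⁻¹ with hVdef
          have hVopen : IsOpen V := hUopen.inter (θ.isOpen a⁻¹)
          by_cases hfix : ∀ x ∈ V, x ∈ θ.Fix a
          · obtain ⟨x, hxV, hP⟩ := hi {1, a} V hVopen hV (by
              intro g hg
              rcases Finset.mem_insert.mp hg with h | h
              · subst h; intro y _; exact θ.mem_Xg_one_inv y
              · rw [Finset.mem_singleton] at h; subst h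
                exact fun y hy => hy.2)
            have h1 : x ∈ θ.Xg (1 : G)⁻¹ := θ.mem_Xg_one_inv x
            have ha' : x ∈ θ.Xg a⁻¹ := hxV.2
            have hPa := hP 1 (by simp) a (by simp) (Ne.symm ha1) h1 ha'
            apply hPa
            rw [θ.t_one ⟨x, h1⟩]
            obtain ⟨hx', hfx⟩ := hfix x hxV
            exact hfx.symm
          · push_neg at hfix
            obtain ⟨y, hyV, hyfix⟩ := hfix
            set S := {x : X | ∃ hx : x ∈ θ.Xg a⁻¹, ((θ.t a ⟨x, hx⟩ : X)) ≠ x} with hSdef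
            have hWopen : IsOpen (V ∩ S) := hVopen.inter (θ.isOpen_notFix a)
            have hyS : y ∈ S := by
              refine ⟨hyV.2, ?_⟩
              intro hEq
              exact hyfix ⟨hyV.2, hEq⟩
            have hWsub : V ∩ S ⊆ ⋃ g ∈ s, θ.Fix g := by
              rintro x ⟨hxV, hxS⟩
              have hxU := hUsub hxV.1
              simp only [Set.mem_iUnion] at hxU ⊢
              obtain ⟨g, hg, hgfix⟩ := hxU
              rcases Finset.mem_insert.mp hg with h | h
              · subst h
                obtain ⟨h1, h2⟩ := hgfix
                obtain ⟨h3, h4⟩ := hxS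
                exact absurd h2 h4
              · exact ⟨g, h, hgfix⟩
            exact ih hs1 (V ∩ S) hWopen ⟨y, hyV, hyS⟩ hWsub
        · have hsub' : U ⊆ ⋃ g ∈ s, θ.Fix g := by
            intro x hxU
            have hx := hUsub hxU
            simp only [Set.mem_iUnion] at hx ⊢
            obtain ⟨g, hg, hgfix⟩ := hx
            rcases Finset.mem_insert.mp hg with h | h
            · subst h
              exact absurd ⟨x, hxU, hgfix.1⟩ hV
            · exact ⟨g, h, hgfix⟩
          exact ih hs1 U hUopen hUne hsub'
    intro F hF
    by_contra hne
    exact claim F hF (interior (⋃ g ∈ F, θ.Fix g)) isOpen_interior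
      (Set.nonempty_iff_ne_empty.mpr hne) interior_subset
  · intro hii F U hUopen hUne hUsub
    by_contra hcon
    push_neg at hcon
    set H := ((F ×ˢ F).filter (fun p => p.1 ≠ p.2)).image (fun p => p.2⁻¹ * p.1) with hHdef
    have hH : ∀ h ∈ H, h ≠ 1 := by
      intro h hh
      simp only [hHdef, Finset.mem_image, Finset.mem_filter, Finset.mem_product] at hh
      obtain ⟨⟨g, g'⟩, ⟨_, hne⟩, rfl⟩ := hh
      intro h1
      exact hne (inv_mul_eq_one.mp h1).symm
    have hint := hii H hH
    have hsub : U ⊆ ⋃ h ∈ H, θ.Fix h := by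
      intro x hxU
      obtain ⟨g, hgF, g', hg'F, hne, hg, hg', heq⟩ := hcon x hxU
      exact Set.mem_biUnion (Finset.mem_image.mpr ⟨(g, g'),
        Finset.mem_filter.mpr ⟨Finset.mem_product.mpr ⟨hgF, hg'F⟩, hne⟩, rfl⟩)
        (θ.fix_of_eq x hg hg' heq)
    obtain ⟨x, hx⟩ := hUne
    have hmem : x ∈ interior (⋃ h ∈ H, θ.Fix h) :=
      (hUopen.subset_interior_iff.mpr hsub) hx
    rw [hint] at hmem
    exact hmem
end
end
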